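/- Let A ⊂ ℝ² be compact. For any 0 ≤ L < H¹(A) there exists r₀ > 0 such that for every r < r₀ there exist finitely many points x₁,…,x_N ∈ A with: (i) the balls B(x_i, r/2) are pairwise disjoint; (ii) A ⊂ ∪ᵢ B(x_i, r); (iii) L < 2Nr. -/

import Mathlib

open MeasureTheory Metric Set Filter Topology
open scoped ENNReal NNReal

/-- A maximal `r`-separated finite subset of a compact set gives a cover by `r`-balls. -/
lemma exists_maximal_net {X : Type*} [MetricSpace X] {A : Set X} (hA : IsCompact A)
    {r : ℝ} (hr : 0 < r) :
    ∃ s : Finset X, ↑s ⊆ A ∧ (∀ x ∈ s, ∀ y ∈ s, x ≠ y → r ≤ dist x y) ∧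
      A ⊆ ⋃ x ∈ s, ball x r := by
  classical
  obtain ⟨u, huA, hufin, hucov⟩ := hA.finite_cover_balls (half_pos hr)
  set U := hufin.toFinset with hU
  -- cardinality bound for separated sets
  have key : ∀ t : Finset X, ↑t ⊆ A → (∀ x ∈ t, ∀ y ∈ t, x ≠ y → r ≤ dist x y) →
      t.card ≤ U.card := by
    intro t htA hsep
    have hmap : ∀ x ∈ t, ∃ c ∈ U, x ∈ ball c (r / 2) := by
      intro x hx
      have := hucov (htA hx)
      simp only [mem_iUnion, exists_prop] at this
      obtain ⟨c, hc, hxc⟩ := this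
      exact ⟨c, by simpa [hU] using hc, hxc⟩
    choose f hf hfb using hmap
    have : ∀ x (hx : x ∈ t) y (hy : y ∈ t), f x hx = f y hy → x = y := by
      intro x hx y hy hfe
      by_contra hne
      have h1 := hfb x hx
      have h2 := hfb y hy
      rw [hfe] at h1
      have : dist x y < r := by
        calc dist x y ≤ dist x (f y hy) + dist (f y hy) y := dist_triangle _ _ _
          _ < r / 2 + r / 2 := by
              rw [mem_ball] at h1 h2
              exact add_lt_add h1 (by rw [dist_comm]; exact h2)
          _ = r := by ring
      exact absurd (hsep x hx y hy hne) (not_le.mpr this)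
    apply Finset.card_le_card_of_injOn (fun x => if h : x ∈ t then f x h else x)
    · intro a ha
      simp only [Finset.mem_coe] at ha
      simp [ha, hf a ha]
    · intro a ha b hb hab
      simp only [Finset.mem_coe] at ha hb
      simp only [ha, hb, dif_pos] at hab
      exact this a ha b hb hab
  -- pick a separated set of maximal cardinality
  set P : ℕ → Prop := fun n => ∃ t : Finset X, ↑t ⊆ A ∧
      (∀ x ∈ t, ∀ y ∈ t, x ≠ y → r ≤ dist x y) ∧ t.card = n with hP
  have hP0 : P 0 := ⟨∅, by simp, by simp, rfl⟩
  have hPM : P (Nat.findGreatest P U.card) :=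
    Nat.findGreatest_spec (Nat.zero_le _) hP0
  obtain ⟨t, htA, hsep, hcard⟩ := hPM
  refine ⟨t, htA, hsep, ?_⟩
  intro a haA
  by_contra hcov
  simp only [mem_iUnion, exists_prop, not_exists, not_and, mem_ball, not_lt] at hcov
  have hat : a ∉ t := fun h => absurd (hcov a h) (by simpa using hr)
  have hP' : P (t.card + 1) := by
    refine ⟨insert a t, ?_, ?_, by rw [Finset.card_insert_of_notMem hat]⟩
    · intro x hx
      simp only [Finset.coe_insert, Set.mem_insert_iff] at hx
      rcases hx with rfl | hx
      · exact haA
      · exact htA hx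
    · intro x hx y hy hne
      simp only [Finset.mem_insert] at hx hy
      rcases hx with rfl | hx <;> rcases hy with rfl | hy
      · exact absurd rfl hne
      · exact hcov y hy
      · rw [dist_comm]; exact hcov x hx
      · exact hsep x hx y hy hne
  have hle : t.card + 1 ≤ U.card := by
    obtain ⟨t', h1, h2, h3⟩ := hP'
    rw [← h3]; exact key t' h1 h2
  exact absurd hP' (Nat.findGreatest_is_greatest (by omega) hle)

/-- Covering lemma: for compact `A ⊂ ℝ²` and `0 ≤ L < H¹(A)` there is `r₀ > 0`
such that every `r < r₀` admits finitely many centers `x_i ∈ A` with disjoint balls of radius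
`r/2`, covering `A` by balls of radius `r`, and `L < 2Nr`. -/
theorem stmt_3 (A : Set (EuclideanSpace ℝ (Fin 2))) (hA : IsCompact A)
    (L : ℝ) (hL : 0 ≤ L) (hLA : ENNReal.ofReal L < μH[1] A) :
    ∃ r₀ > (0:ℝ), ∀ r : ℝ, 0 < r → r < r₀ →
      ∃ (N : ℕ) (x : Fin N → EuclideanSpace ℝ (Fin 2)),
        (∀ i, x i ∈ A) ∧
        (∀ i j, i ≠ j → Disjoint (ball (x i) (r / 2)) (ball (x j) (r / 2))) ∧
        A ⊆ ⋃ i, ball (x i) r ∧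
        L < 2 * N * r := by
  classical
  rw [Measure.hausdorffMeasure_apply] at hLA
  simp only [lt_iSup_iff] at hLA
  obtain ⟨ε, hεpos, hε⟩ := hLA
  set ε' : ℝ≥0∞ := min ε 1 with hε'
  have hε'pos : 0 < ε' := lt_min hεpos zero_lt_one
  have hε'top : ε' ≠ ⊤ := ne_top_of_le_ne_top ENNReal.one_ne_top (min_le_right _ _)
  have hε't : 0 < ε'.toReal := ENNReal.toReal_pos hε'pos.ne' hε'top
  refine ⟨ε'.toReal / 2, by linarith, ?_⟩
  intro r hr hrr₀
  obtain ⟨s, hsA, hsep, hscov⟩ := exists_maximal_net hA hr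
  refine ⟨s.card, fun i => (s.equivFin.symm i : _), ?_, ?_, ?_, ?_⟩
  · intro i; exact hsA (s.equivFin.symm i).2
  · intro i j hij
    apply ball_disjoint_ball
    have hne : ((s.equivFin.symm i : _) : EuclideanSpace ℝ (Fin 2)) ≠ (s.equivFin.symm j : _) := by
      intro h
      exact hij (s.equivFin.symm.injective (Subtype.coe_injective h))
    have := hsep _ (s.equivFin.symm i).2 _ (s.equivFin.symm j).2 hne
    linarith
  · intro a ha
    have := hscov ha
    simp only [mem_iUnion, exists_prop] at this
    obtain ⟨c, hc, hac⟩ := this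
    refine mem_iUnion.mpr ⟨s.equivFin ⟨c, hc⟩, ?_⟩
    simpa [Equiv.symm_apply_apply] using hac
  · -- measure estimate
    set N := s.card with hN
    set x : Fin N → EuclideanSpace ℝ (Fin 2) := fun i => (s.equivFin.symm i : _) with hx
    set T : ℕ → Set (EuclideanSpace ℝ (Fin 2)) :=
      fun n => if h : n < N then ball (x ⟨n, h⟩) r else ∅ with hT
    have h2r : ENNReal.ofReal (2 * r) ≤ ε' := by
      have : 2 * r < ε'.toReal := by linarith
      calc ENNReal.ofReal (2 * r) ≤ ENNReal.ofReal ε'.toReal :=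
            ENNReal.ofReal_le_ofReal this.le
        _ = ε' := ENNReal.ofReal_toReal hε'top
    have hdiam : ∀ n, EMetric.diam (T n) ≤ ε := by
      intro n
      by_cases h : n < N
      · have hTn : T n = ball (x ⟨n, h⟩) r := by simp only [hT]; rw [dif_pos h]
        rw [hTn]
        refine le_trans ?_ (le_trans h2r (min_le_left _ _))
        refine EMetric.diam_le fun a ha b hb => ?_
        rw [edist_dist]
        refine ENNReal.ofReal_le_ofReal ?_
        rw [mem_ball] at ha hb
        calc dist a b ≤ dist a _ + dist _ b := dist_triangle _ (x ⟨n, h⟩) _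
          _ ≤ r + r := add_le_add ha.le (by rw [dist_comm]; exact hb.le)
          _ = 2 * r := by ring
      · have hTn : T n = ∅ := by simp only [hT]; rw [dif_neg h]
        rw [hTn]; exact EMetric.diam_le fun a ha => by simp at ha
    have hTcov : A ⊆ ⋃ n, T n := by
      intro a ha
      have := hscov ha
      simp only [mem_iUnion, exists_prop] at this
      obtain ⟨c, hc, hac⟩ := this
      set i := s.equivFin ⟨c, hc⟩ with hi
      refine mem_iUnion.mpr ⟨(i : ℕ), ?_⟩
      have hxi : x ⟨(i : ℕ), i.isLt⟩ = c := by
        simp [hx, hi, Fin.eta, Equiv.symm_apply_apply]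
      have hTn : T (i : ℕ) = ball (x ⟨(i : ℕ), i.isLt⟩) r := by
        simp only [hT]; rw [dif_pos i.isLt]
      rw [hTn, hxi]
      exact hac
    have hkey : ENNReal.ofReal L < ∑' n, ⨆ _ : (T n).Nonempty, EMetric.diam (T n) ^ (1 : ℝ) :=
      lt_of_lt_of_le hε (le_trans (iInf_le _ T) (le_trans (iInf_le _ hTcov) (iInf_le _ hdiam)))
    have hbound : (∑' n, ⨆ _ : (T n).Nonempty, EMetric.diam (T n) ^ (1 : ℝ)) ≤
        (N : ℝ≥0∞) * ENNReal.ofReal (2 * r) := by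
      have hterm : ∀ n, (⨆ _ : (T n).Nonempty, EMetric.diam (T n) ^ (1 : ℝ)) ≤
          (if n < N then ENNReal.ofReal (2 * r) else 0) := by
        intro n
        by_cases h : n < N
        · simp only [h, if_true]
          refine iSup_le fun _ => ?_
          rw [ENNReal.rpow_one]
          have hTn : T n = ball (x ⟨n, h⟩) r := by simp only [hT]; rw [dif_pos h]
          rw [hTn]
          refine EMetric.diam_le fun a ha b hb => ?_
          rw [edist_dist]
          refine ENNReal.ofReal_le_ofReal ?_
          rw [mem_ball] at ha hb
          calc dist a b ≤ dist a _ + dist _ b := dist_triangle _ (x ⟨n, h⟩) _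
            _ ≤ r + r := add_le_add ha.le (by rw [dist_comm]; exact hb.le)
            _ = 2 * r := by ring
        · simp only [h, if_false]
          have hTn : T n = ∅ := by simp only [hT]; rw [dif_neg h]
          simp [hTn]
      calc (∑' n, ⨆ _ : (T n).Nonempty, EMetric.diam (T n) ^ (1 : ℝ))
          ≤ ∑' n, (if n < N then ENNReal.ofReal (2 * r) else 0) := ENNReal.tsum_le_tsum hterm
        _ = ∑ n ∈ Finset.range N, (if n < N then ENNReal.ofReal (2 * r) else 0) := by
            refine tsum_eq_sum fun n hn => ?_
            simp only [Finset.mem_range, not_lt] at hn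
            simp [Nat.not_lt.mpr hn]
        _ = (N : ℝ≥0∞) * ENNReal.ofReal (2 * r) := by
            rw [Finset.sum_ite_of_true (fun n hn => Finset.mem_range.mp hn),
              Finset.sum_const, Finset.card_range, nsmul_eq_mul]
    have hfin : ENNReal.ofReal L < ENNReal.ofReal ((N : ℝ) * (2 * r)) := by
      have := lt_of_lt_of_le hkey hbound
      rwa [← ENNReal.ofReal_natCast N, ← ENNReal.ofReal_mul (Nat.cast_nonneg N)] at this
    have := (ENNReal.ofReal_lt_ofReal_iff_of_nonneg hL).mp hfin
    linarith
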